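/- In a pair of reversed schedules for two days, if clients j₁, j₂ both satisfy p(1,j) ≤ p(2,j), p(1,j₁) ≤ p(1,j₂), and j₁ is scheduled directly after j₂ on day one, then after swapping j₁ and j₂ on both days, the maximum of the two clients' total completion times does not exceed the total completion time of j₂ before the swap. -/
import Mathlib


def C {n : ℕ} (σ : Equiv.Perm (Fin n)) (p : Fin n → ℕ) (j : Fin n) : ℕ :=
  ∑ j' ∈ Finset.univ.filter (fun j' => σ j' ≤ σ j), p j'

open Finset

lemma step {n : ℕ} (σ : Equiv.Perm (Fin n)) (p : Fin n → ℕ) (a b : Fin n)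
    (hab : (σ b : ℕ) + 1 = σ a) :
    C σ p a = C σ p b + p a := by
  have hset : Finset.univ.filter (fun x => σ x ≤ σ a)
      = insert a (Finset.univ.filter (fun x => σ x ≤ σ b)) := by
    ext x
    simp only [mem_filter, mem_univ, true_and, mem_insert, Fin.le_def]
    constructor
    · intro h
      rcases eq_or_lt_of_le h with h' | h'
      · left
        exact σ.injective (Fin.val_injective h')
      · right; omega
    · rintro (rfl | h) <;> omega
  have hnotmem : a ∉ Finset.univ.filter (fun x => σ x ≤ σ b) := by
    simp only [mem_filter, mem_univ, true_and, Fin.le_def]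
    omega
  rw [C, hset, Finset.sum_insert hnotmem, ← C]
  ring

lemma swapC_b {n : ℕ} (σ : Equiv.Perm (Fin n)) (p : Fin n → ℕ) (a b : Fin n)
    (hab : (σ b : ℕ) + 1 = σ a) :
    C ((Equiv.swap a b).trans σ) p b = C σ p b + p a := by
  have hset : Finset.univ.filter
        (fun x => ((Equiv.swap a b).trans σ) x ≤ ((Equiv.swap a b).trans σ) b)
      = Finset.univ.filter (fun x => σ x ≤ σ a) := by
    ext x
    simp only [mem_filter, mem_univ, true_and, Equiv.trans_apply,
      Equiv.swap_apply_right, Fin.le_def]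
    by_cases hxa : x = a
    · subst hxa; rw [Equiv.swap_apply_left]; omega
    · by_cases hxb : x = b
      · subst hxb; rw [Equiv.swap_apply_right]; omega
      · rw [Equiv.swap_apply_of_ne_of_ne hxa hxb]
  rw [C, hset, ← C, step σ p a b hab]

lemma swapC_a {n : ℕ} (σ : Equiv.Perm (Fin n)) (p : Fin n → ℕ) (a b : Fin n)
    (hab : (σ b : ℕ) + 1 = σ a) :
    C ((Equiv.swap a b).trans σ) p a + p b = C σ p b + p a := by
  have hne : a ≠ b := by
    intro h; subst h; omega
  set T := (Finset.univ.filter (fun x => σ x ≤ σ b)).erase b with hT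
  have haT : a ∉ T := by
    intro h
    have := Finset.mem_of_mem_erase h
    simp only [mem_filter, mem_univ, true_and, Fin.le_def] at this
    omega
  have hbT : b ∉ T := Finset.notMem_erase _ _
  have hset1 : Finset.univ.filter
        (fun x => ((Equiv.swap a b).trans σ) x ≤ ((Equiv.swap a b).trans σ) a)
      = insert a T := by
    ext x
    simp only [hT, mem_filter, mem_univ, true_and, mem_insert, mem_erase,
      Equiv.trans_apply, Equiv.swap_apply_left, Fin.le_def]
    by_cases hxa : x = a
    · subst hxa; rw [Equiv.swap_apply_left]; simp
    · by_cases hxb : x = b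
      · subst hxb; rw [Equiv.swap_apply_right]
        constructor
        · intro h; omega
        · rintro (rfl | ⟨h, _⟩)
          · omega
          · exact absurd rfl h
      · rw [Equiv.swap_apply_of_ne_of_ne hxa hxb]
        constructor
        · intro h; right; exact ⟨hxb, h⟩
        · rintro (rfl | ⟨_, h⟩)
          · exact absurd rfl hxa
          · exact h
  have hset2 : Finset.univ.filter (fun x => σ x ≤ σ b) = insert b T := by
    rw [hT, Finset.insert_erase]
    simp only [mem_filter, mem_univ, true_and, le_refl]
  rw [C, hset1, Finset.sum_insert haT, C, hset2, Finset.sum_insert hbT]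
  ring

lemma swapC_other {n : ℕ} (σ : Equiv.Perm (Fin n)) (p : Fin n → ℕ) (a b j : Fin n)
    (hab : (σ b : ℕ) + 1 = σ a) (hja : j ≠ a) (hjb : j ≠ b) :
    C ((Equiv.swap a b).trans σ) p j = C σ p j := by
  have hja' : (σ j : ℕ) ≠ σ a := fun h =>
    hja (σ.injective (Fin.val_injective h))
  have hjb' : (σ j : ℕ) ≠ σ b := fun h =>
    hjb (σ.injective (Fin.val_injective h))
  have hset : Finset.univ.filter
        (fun x => ((Equiv.swap a b).trans σ) x ≤ ((Equiv.swap a b).trans σ) j)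
      = Finset.univ.filter (fun x => σ x ≤ σ j) := by
    ext x
    simp only [mem_filter, mem_univ, true_and, Equiv.trans_apply, Fin.le_def]
    rw [Equiv.swap_apply_of_ne_of_ne hja hjb]
    by_cases hxa : x = a
    · subst hxa; rw [Equiv.swap_apply_left]; omega
    · by_cases hxb : x = b
      · subst hxb; rw [Equiv.swap_apply_right]; omega
      · rw [Equiv.swap_apply_of_ne_of_ne hxa hxb]
  rw [C, hset, ← C]

theorem stmt5 (n : ℕ) (p1 p2 : Fin n → ℕ) (σ₁ σ₂ : Equiv.Perm (Fin n)) (j₁ j₂ : Fin n)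
    (hrev : ∀ j, (σ₂ j : ℕ) = n - 1 - (σ₁ j : ℕ))
    (hadj : (σ₁ j₂ : ℕ) + 1 = (σ₁ j₁ : ℕ))
    (h1 : p1 j₁ ≤ p2 j₁) (h2 : p1 j₂ ≤ p2 j₂) (h12 : p1 j₁ ≤ p1 j₂) :
    max (C ((Equiv.swap j₁ j₂).trans σ₁) p1 j₁ + C ((Equiv.swap j₁ j₂).trans σ₂) p2 j₁)
        (C ((Equiv.swap j₁ j₂).trans σ₁) p1 j₂ + C ((Equiv.swap j₁ j₂).trans σ₂) p2 j₂)
      ≤ C σ₁ p1 j₂ + C σ₂ p2 j₂ ∧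
    (∀ j, j ≠ j₁ → j ≠ j₂ →
      C ((Equiv.swap j₁ j₂).trans σ₁) p1 j + C ((Equiv.swap j₁ j₂).trans σ₂) p2 j
        = C σ₁ p1 j + C σ₂ p2 j) := by
  have hlt : (σ₁ j₁ : ℕ) < n := (σ₁ j₁).isLt
  have hadj2 : (σ₂ j₁ : ℕ) + 1 = (σ₂ j₂ : ℕ) := by
    rw [hrev j₁, hrev j₂]; omega
  have hA := swapC_b σ₁ p1 j₁ j₂ hadj
  have hB := swapC_a σ₁ p1 j₁ j₂ hadj
  have hC := swapC_b σ₂ p2 j₂ j₁ hadj2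
  have hD := swapC_a σ₂ p2 j₂ j₁ hadj2
  have hE := step σ₂ p2 j₂ j₁ hadj2
  rw [Equiv.swap_comm j₂ j₁] at hC hD
  constructor
  · simp only [max_le_iff]
    omega
  · intro j hj1 hj2
    have o1 := swapC_other σ₁ p1 j₁ j₂ j hadj hj1 hj2
    have o2 := swapC_other σ₂ p2 j₂ j₁ j hadj2 hj2 hj1
    rw [Equiv.swap_comm j₂ j₁] at o2
    omega
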